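/- Let D be a nonnegative-definite symmetric d×d real matrix and x a standard Gaussian vector in ℝ^d. Then for every p ≥ 1 there is a constant C_p > 0 (depending only on p) such that E[|xᵀ D x|^p] ≤ C_p ((Tr D)^p + (2p−1)!! · Tr(D^p)). -/

import Mathlib

open MeasureTheory ProbabilityTheory Matrix
open scoped ENNReal NNReal

lemma lintegral_pi_prod : ∀ (n : ℕ) (μ : Fin n → Measure ℝ) (_ : ∀ i, SigmaFinite (μ i))
    (f : Fin n → ℝ → ℝ≥0∞) (_ : ∀ i, Measurable (f i)),
    ∫⁻ x, ∏ i, f i (x i) ∂(Measure.pi μ) = ∏ i, ∫⁻ y, f i y ∂(μ i) := by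
  intro n
  induction n with
  | zero =>
      intro μ _ f _
      simp [lintegral_one, Measure.pi_univ]
  | succ n ih =>
      intro μ hσ f hf
      have hmp := (measurePreserving_piFinSuccAbove (fun i : Fin (n+1) => μ i) 0)
      set F : ℝ × (Fin n → ℝ) → ℝ≥0∞ :=
        fun q => f 0 q.1 * ∏ j, f (Fin.succ j) (q.2 j) with hF
      have hFm : Measurable F := by
        apply Measurable.mul
        · exact (hf 0).comp measurable_fst
        · exact Finset.measurable_prod _ fun j _ =>
            (hf _).comp ((measurable_pi_apply j).comp measurable_snd)
      have hcomp : ∀ x : Fin (n+1) → ℝ, (∏ i, f i (x i)) =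
          F (MeasurableEquiv.piFinSuccAbove (fun _ : Fin (n+1) => ℝ) 0 x) := by
        intro x
        rw [Fin.prod_univ_succ]
        simp [hF, MeasurableEquiv.piFinSuccAbove, Fin.zero_succAbove, Fin.tail]
      calc ∫⁻ x, ∏ i, f i (x i) ∂(Measure.pi μ)
          = ∫⁻ x, F (MeasurableEquiv.piFinSuccAbove (fun _ : Fin (n+1) => ℝ) 0 x)
              ∂(Measure.pi μ) := by simp_rw [hcomp]
        _ = ∫⁻ q, F q ∂((μ 0).prod (Measure.pi fun j => μ ((0 : Fin (n+1)).succAbove j))) :=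
            hmp.lintegral_comp hFm
        _ = (∫⁻ y, f 0 y ∂(μ 0)) *
              ∫⁻ y, ∏ j, f (Fin.succ j) (y j) ∂(Measure.pi fun j : Fin n => μ (Fin.succ j)) := by
            rw [show (fun j : Fin n => μ ((0 : Fin (n+1)).succAbove j)) =
              fun j : Fin n => μ (Fin.succ j) by funext j; rw [Fin.zero_succAbove]]
            exact lintegral_prod_mul (hf 0).aemeasurable
              (Finset.measurable_prod _ fun j _ =>
                (hf _).comp (measurable_pi_apply j)).aemeasurable
        _ = (∫⁻ y, f 0 y ∂(μ 0)) * ∏ j, ∫⁻ y, f (Fin.succ j) y ∂(μ (Fin.succ j)) := by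
            rw [ih (fun j => μ (Fin.succ j)) (fun j => hσ _) (fun j => f (Fin.succ j))
              (fun j => hf _)]
        _ = ∏ i, ∫⁻ y, f i y ∂(μ i) :=
            (Fin.prod_univ_succ fun i => ∫⁻ y, f i y ∂(μ i)).symm

lemma pi_gaussian_eq_withDensity (d : ℕ) :
    (Measure.pi fun _ : Fin d => gaussianReal 0 1) =
      (volume : Measure (Fin d → ℝ)).withDensity
        (fun x => ∏ i, gaussianPDF 0 1 (x i)) := by
  refine Measure.pi_eq fun s hs => ?_
  rw [withDensity_apply _ (MeasurableSet.univ_pi hs),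
    ← lintegral_indicator (MeasurableSet.univ_pi hs)]
  have hind : ∀ x : Fin d → ℝ,
      (Set.univ.pi s).indicator (fun x => ∏ i, gaussianPDF 0 1 (x i)) x =
        ∏ i, (s i).indicator (gaussianPDF 0 1) (x i) := by
    intro x
    by_cases h : x ∈ Set.univ.pi s
    · rw [Set.indicator_of_mem h]
      exact Finset.prod_congr rfl fun i _ =>
        (Set.indicator_of_mem (h i trivial) _).symm
    · rw [Set.indicator_of_notMem h]
      obtain ⟨i, hi⟩ : ∃ i, x i ∉ s i := by
        by_contra hc
        push_neg at hc
        exact h fun i _ => hc i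
      exact (Finset.prod_eq_zero (Finset.mem_univ i)
        (Set.indicator_of_notMem hi _)).symm
  simp_rw [hind]
  rw [show (volume : Measure (Fin d → ℝ)) = Measure.pi fun _ => volume from volume_pi]
  rw [lintegral_pi_prod d _ (fun _ => by infer_instance) _
    (fun i => (measurable_gaussianPDF 0 1).indicator (hs i))]
  refine Finset.prod_congr rfl fun i _ => ?_
  rw [lintegral_indicator (hs i), gaussianReal_apply 0 one_ne_zero (s i)]

lemma measurable_mulVec {d : ℕ} (U : Matrix (Fin d) (Fin d) ℝ) :
    Measurable fun x : Fin d → ℝ => U *ᵥ x := by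
  refine measurable_pi_lambda _ fun i => ?_
  simp only [Matrix.mulVec, dotProduct]
  exact Finset.measurable_sum _ fun j _ => (measurable_pi_apply j).const_mul _

lemma dotProduct_mulVec_self {d : ℕ} {U : Matrix (Fin d) (Fin d) ℝ}
    (hU : star U * U = 1) (x w : Fin d → ℝ) :
    (U *ᵥ x) ⬝ᵥ (U *ᵥ w) = x ⬝ᵥ w := by
  rw [Matrix.dotProduct_mulVec, show U *ᵥ x = x ᵥ* Uᵀ from (Matrix.vecMul_transpose U x).symm,
    Matrix.vecMul_vecMul]
  have h2 : Uᵀ * U = 1 := by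
    rw [Matrix.star_eq_conjTranspose, Matrix.conjTranspose_eq_transpose_of_trivial] at hU
    exact hU
  rw [h2, Matrix.vecMul_one]

lemma gauss_density_rot {d : ℕ} {U : Matrix (Fin d) (Fin d) ℝ}
    (hU : star U * U = 1) (x : Fin d → ℝ) :
    (∏ i, gaussianPDF 0 1 ((U *ᵥ x) i)) = ∏ i, gaussianPDF 0 1 (x i) := by
  have key : ∀ y : Fin d → ℝ, (∏ i, gaussianPDF 0 1 (y i)) =
      ENNReal.ofReal ((Real.sqrt (2 * Real.pi))⁻¹ ^ d * Real.exp (-(y ⬝ᵥ y) / 2)) := by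
    intro y
    rw [show (fun i => gaussianPDF 0 1 (y i)) = fun i => ENNReal.ofReal
      ((Real.sqrt (2 * Real.pi))⁻¹ * Real.exp (-(y i)^2 / 2)) from ?_]
    · rw [← ENNReal.ofReal_prod_of_nonneg]
      · congr 1
        rw [Finset.prod_mul_distrib, Finset.prod_const, ← Real.exp_sum]
        congr 2
        · simp
        · rw [dotProduct, ← Finset.sum_div, ← Finset.sum_neg_distrib]
          congr 1
          exact Finset.sum_congr rfl fun i _ => by ring
      · intro i _
        positivity
    · funext i
      rw [gaussianPDF]
      congr 1
      rw [gaussianPDFReal_def]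
      norm_num
  rw [key, key, dotProduct_mulVec_self hU]

lemma lintegral_rot {d : ℕ} {U : Matrix (Fin d) (Fin d) ℝ}
    (hU : U ∈ Matrix.unitaryGroup (Fin d) ℝ) {f : (Fin d → ℝ) → ℝ≥0∞} (hf : Measurable f) :
    ∫⁻ x, f (U *ᵥ x) ∂(Measure.pi fun _ : Fin d => gaussianReal 0 1) =
      ∫⁻ x, f x ∂(Measure.pi fun _ : Fin d => gaussianReal 0 1) := by
  have hU1 : star U * U = 1 := hU.1
  have hdet : U.det ≠ 0 := by
    intro h
    have := congrArg Matrix.det hU1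
    rw [Matrix.det_mul, h, mul_zero, Matrix.det_one] at this
    exact zero_ne_one this
  have habs : |U.det⁻¹| = 1 := by
    have h1 : U.det * U.det = 1 := by
      have := congrArg Matrix.det hU1
      rwa [Matrix.det_mul, Matrix.star_eq_conjTranspose,
        Matrix.det_conjTranspose, star_trivial, Matrix.det_one] at this
    have h2 : |U.det| = 1 := by
      rcases mul_self_eq_one_iff.mp h1 with h | h <;> rw [h] <;> norm_num
    rw [abs_inv, h2]; norm_num
  have hcm : Measurable fun x : Fin d → ℝ => f (U *ᵥ x) := hf.comp (measurable_mulVec U)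
  set g : (Fin d → ℝ) → ℝ≥0∞ := fun x => ∏ i, gaussianPDF 0 1 (x i) with hg
  have hgm : Measurable g :=
    Finset.measurable_prod _ fun i _ =>
      (measurable_gaussianPDF 0 1).comp (measurable_pi_apply i)
  have hmap : Measure.map (fun x : Fin d → ℝ => U *ᵥ x) volume = volume := by
    have := Real.map_matrix_volume_pi_eq_smul_volume_pi hdet
    rw [show ⇑(Matrix.toLin' U) = fun x : Fin d → ℝ => U *ᵥ x from
      funext fun x => Matrix.toLin'_apply U x] at this
    rw [this, habs, ENNReal.ofReal_one, one_smul]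
  calc ∫⁻ x, f (U *ᵥ x) ∂(Measure.pi fun _ : Fin d => gaussianReal 0 1)
      = ∫⁻ x, g x * f (U *ᵥ x) ∂volume := by
        rw [pi_gaussian_eq_withDensity d,
          lintegral_withDensity_eq_lintegral_mul _ hgm hcm]
        rfl
    _ = ∫⁻ x, (fun y => g y * f y) (U *ᵥ x) ∂volume := by
        refine lintegral_congr fun x => ?_
        simp only
        rw [hg]
        simp only
        rw [gauss_density_rot hU1]
    _ = ∫⁻ y, g y * f y ∂(Measure.map (fun x : Fin d → ℝ => U *ᵥ x) volume) :=
        (lintegral_map (hgm.mul hf) (measurable_mulVec U)).symm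
    _ = ∫⁻ y, g y * f y ∂volume := by rw [hmap]
    _ = ∫⁻ y, f y ∂(Measure.pi fun _ : Fin d => gaussianReal 0 1) := by
        rw [pi_gaussian_eq_withDensity d,
          lintegral_withDensity_eq_lintegral_mul _ hgm hf]
        rfl

lemma lintegral_eval_pow {d : ℕ} (i : Fin d) (k : ℕ) :
    ∫⁻ x, ENNReal.ofReal ((x i) ^ k) ∂(Measure.pi fun _ : Fin d => gaussianReal 0 1) =
      ∫⁻ t, ENNReal.ofReal (t ^ k) ∂(gaussianReal 0 1) := by
  classical
  set f : Fin d → ℝ → ℝ≥0∞ :=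
    fun j => if j = i then (fun t => ENNReal.ofReal (t ^ k)) else (fun _ => 1) with hfdef
  have hfm : ∀ j, Measurable (f j) := by
    intro j
    by_cases h : j = i <;> simp [hfdef, h]
    exact (measurable_id.pow_const k).ennreal_ofReal
  have h1 : ∀ x : Fin d → ℝ, ENNReal.ofReal ((x i) ^ k) = ∏ j, f j (x j) := by
    intro x
    rw [show (fun j => f j (x j)) = fun j => if j = i then ENNReal.ofReal ((x j) ^ k) else 1 from
      funext fun j => by by_cases h : j = i <;> simp [hfdef, h]]
    rw [Finset.prod_ite_eq' Finset.univ i (fun j => ENNReal.ofReal ((x j) ^ k))]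
    simp
  simp_rw [h1]
  rw [lintegral_pi_prod d _ (fun _ => by infer_instance) f hfm]
  rw [show (fun j => ∫⁻ y, f j y ∂(gaussianReal 0 1)) =
      fun j => if j = i then ∫⁻ t, ENNReal.ofReal (t ^ k) ∂(gaussianReal 0 1) else 1 from
    funext fun j => by by_cases h : j = i <;> simp [hfdef, h]]
  rw [Finset.prod_ite_eq' Finset.univ i
    (fun _ => ∫⁻ t, ENNReal.ofReal (t ^ k) ∂(gaussianReal 0 1))]
  simp

lemma gaussian_moment_lt_top (k : ℕ) :
    ∫⁻ t, ENNReal.ofReal (t ^ (2 * k)) ∂(gaussianReal 0 1) < ⊤ := by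
  have hmm : Measurable fun t : ℝ => ENNReal.ofReal (t ^ (2 * k)) := by fun_prop
  rw [gaussianReal_of_var_ne_zero 0 one_ne_zero,
    lintegral_withDensity_eq_lintegral_mul _ (measurable_gaussianPDF 0 1) hmm]
  have heq : ∀ t : ℝ, (gaussianPDF 0 1 * fun t => ENNReal.ofReal (t ^ (2 * k))) t =
      ENNReal.ofReal (gaussianPDFReal 0 1 t * t ^ (2 * k)) := by
    intro t
    simp only [Pi.mul_apply, gaussianPDF]
    rw [← ENNReal.ofReal_mul (gaussianPDFReal_nonneg 0 1 t)]
  simp_rw [heq]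
  have h0 : Integrable fun t : ℝ => t ^ (2 * k) * Real.exp (-(1/2) * t ^ 2) := by
    have := integrable_rpow_mul_exp_neg_mul_sq (b := 1/2) (by norm_num)
      (s := ((2 * k : ℕ) : ℝ)) (by exact neg_one_lt_zero.trans_le (by positivity))
    simpa only [Real.rpow_natCast] using this
  have hint : Integrable (fun t : ℝ => gaussianPDFReal 0 1 t * t ^ (2 * k)) := by
    have h1 := h0.const_mul ((Real.sqrt (2 * Real.pi))⁻¹)
    have heq2 : (fun t : ℝ => gaussianPDFReal 0 1 t * t ^ (2 * k)) =
        fun t : ℝ => (Real.sqrt (2 * Real.pi))⁻¹ *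
          (t ^ (2 * k) * Real.exp (-(1/2) * t ^ 2)) := by
      funext t
      rw [gaussianPDFReal_def]
      norm_num
      ring_nf
    rw [heq2]
    exact h1
  exact hint.lintegral_lt_top

lemma jensen_aux (p : ℕ) (hp : 1 ≤ p) {d : ℕ} (lam : Fin d → ℝ) (hlam : ∀ i, 0 ≤ lam i)
    (T : ℝ) (hT : T = ∑ i, lam i) (x : Fin d → ℝ) :
    (∑ i, lam i * (x i) ^ 2) ^ p ≤ T ^ (p - 1) * ∑ i, lam i * (x i) ^ (2 * p) := by
  have hT0 : 0 ≤ T := hT ▸ Finset.sum_nonneg fun i _ => hlam i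
  rcases hT0.eq_or_lt with hTz | hTpos
  · have hzero : ∀ i ∈ Finset.univ, lam i = 0 := by
      have := (Finset.sum_eq_zero_iff_of_nonneg fun i _ => hlam i).mp (hT ▸ hTz.symm)
      exact this
    have h1 : (∑ i, lam i * (x i) ^ 2) = 0 :=
      Finset.sum_eq_zero fun i hi => by rw [hzero i hi, zero_mul]
    have h2 : (∑ i, lam i * (x i) ^ (2 * p)) = 0 :=
      Finset.sum_eq_zero fun i hi => by rw [hzero i hi, zero_mul]
    rw [h1, h2, zero_pow (by omega), mul_zero]
  · have h := Real.pow_arith_mean_le_arith_mean_pow Finset.univ (fun i => lam i / T)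
      (fun i => (x i) ^ 2) (fun i _ => div_nonneg (hlam i) hT0)
      (by rw [← Finset.sum_div, ← hT, div_self hTpos.ne']) (fun i _ => sq_nonneg _) p
    simp only [div_mul_eq_mul_div] at h
    rw [← Finset.sum_div, ← Finset.sum_div] at h
    simp only [← pow_mul] at h
    rw [div_pow] at h
    set S2 := ∑ i, lam i * (x i) ^ 2 with hS2
    set S4 := ∑ i, lam i * (x i) ^ (2 * p) with hS4
    have hTp : T ^ p = T ^ (p - 1) * T := by
      rw [← pow_succ]
      congr 1
      omega
    have e1 : S2 ^ p = (S2 ^ p / T ^ p) * T ^ p := by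
      field_simp
    calc S2 ^ p = (S2 ^ p / T ^ p) * T ^ p := e1
      _ ≤ (S4 / T) * T ^ p := mul_le_mul_of_nonneg_right h (pow_nonneg hT0 p)
      _ = T ^ (p - 1) * S4 := by rw [hTp]; field_simp

/-- For a nonnegative-definite symmetric `d×d` real matrix `D` and a standard Gaussian
vector `x` in `ℝ^d`, for every `p ≥ 1` there is a constant `C_p > 0` depending only on `p`
such that `E[|xᵀ D x|^p] ≤ C_p ((Tr D)^p + (2p−1)!! · Tr(D^p))`. -/
theorem stmt3 (p : ℕ) (hp : 1 ≤ p) :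
    ∃ C : ℝ, 0 < C ∧ ∀ (d : ℕ) (D : Matrix (Fin d) (Fin d) ℝ), D.PosSemidef →
      ∫ x, |x ⬝ᵥ D.mulVec x| ^ p ∂(Measure.pi fun _ : Fin d => gaussianReal 0 1) ≤
        C * (D.trace ^ p + (Nat.doubleFactorial (2 * p - 1) : ℝ) * (D ^ p).trace) := by
  classical
  set M := ∫⁻ t, ENNReal.ofReal (t ^ (2 * p)) ∂(gaussianReal 0 1) with hM
  have hMtop : M ≠ ⊤ := (gaussian_moment_lt_top p).ne
  refine ⟨M.toReal + 1, by positivity, ?_⟩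
  intro d D hD
  set π := (Measure.pi fun _ : Fin d => gaussianReal 0 1) with hπ
  -- spectral data
  have hH : D.IsHermitian := hD.1
  set V : Matrix (Fin d) (Fin d) ℝ := (hH.eigenvectorUnitary : Matrix (Fin d) (Fin d) ℝ) with hV
  set lam : Fin d → ℝ := hH.eigenvalues with hlamdef
  have hlam : ∀ i, 0 ≤ lam i := hD.eigenvalues_nonneg
  have hUmem : V ∈ Matrix.unitaryGroup (Fin d) ℝ := hH.eigenvectorUnitary.2
  have hU1 : star V * V = 1 := hUmem.1
  have hspec : D = V * Matrix.diagonal lam * star V := by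
    have := hH.spectral_theorem
    rwa [RCLike.ofReal_real_eq_id, Function.id_comp] at this
  -- quadratic form diagonalization
  have hquad : ∀ x : Fin d → ℝ, (V *ᵥ x) ⬝ᵥ D *ᵥ (V *ᵥ x) = ∑ i, lam i * (x i) ^ 2 := by
    intro x
    conv_lhs => rw [hspec]
    rw [← Matrix.mulVec_mulVec,
      show star V *ᵥ (V *ᵥ x) = x from by rw [Matrix.mulVec_mulVec, hU1, Matrix.one_mulVec],
      ← Matrix.mulVec_mulVec, dotProduct_mulVec_self hU1]
    rw [dotProduct]
    refine Finset.sum_congr rfl fun i _ => ?_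
    rw [Matrix.mulVec_diagonal]
    ring
  -- trace identities
  have htr : D.trace = ∑ i, lam i := by
    conv_lhs => rw [hspec]
    rw [Matrix.trace_mul_cycle, hU1, one_mul, Matrix.trace_diagonal]
  have hT0 : 0 ≤ D.trace := htr ▸ Finset.sum_nonneg fun i _ => hlam i
  have hTrDp : 0 ≤ (D ^ p).trace := by
    rw [Matrix.trace]
    refine Finset.sum_nonneg fun i _ => ?_
    simpa using (hD.pow p).diag_nonneg (i := i)
  -- nonnegativity of the quadratic form
  have hQ : ∀ x : Fin d → ℝ, 0 ≤ x ⬝ᵥ D *ᵥ x := by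
    intro x
    simpa using hD.dotProduct_mulVec_nonneg x
  -- continuity/measurability
  have hq_cont : Continuous fun x : Fin d → ℝ => x ⬝ᵥ D *ᵥ x := by
    have h1 : ∀ i, Continuous fun x : Fin d → ℝ => (D *ᵥ x) i := by
      intro i
      simp only [Matrix.mulVec, dotProduct]
      exact continuous_finset_sum _ fun j _ => continuous_const.mul (continuous_apply j)
    simp only [dotProduct]
    exact continuous_finset_sum _ fun i _ => (continuous_apply i).mul (h1 i)
  have hfm : Measurable fun x : Fin d → ℝ => ENNReal.ofReal (|x ⬝ᵥ D *ᵥ x| ^ p) :=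
    ((hq_cont.abs.pow p).measurable).ennreal_ofReal
  -- rewrite the integral as a lintegral
  rw [integral_eq_lintegral_of_nonneg_ae
    (Filter.Eventually.of_forall fun x => pow_nonneg (abs_nonneg _) p)
    ((hq_cont.abs.pow p).aestronglyMeasurable)]
  -- the key lintegral estimate
  have hsum_meas : Measurable fun x : Fin d → ℝ =>
      ∑ i, ENNReal.ofReal (lam i) * ENNReal.ofReal ((x i) ^ (2 * p)) :=
    Finset.measurable_sum _ fun i _ =>
      (((measurable_pi_apply i).pow_const (2 * p)).ennreal_ofReal).const_mul _
  have key : ∫⁻ x, ENNReal.ofReal (|x ⬝ᵥ D *ᵥ x| ^ p) ∂π ≤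
      ENNReal.ofReal (D.trace ^ p) * M := by
    calc ∫⁻ x, ENNReal.ofReal (|x ⬝ᵥ D *ᵥ x| ^ p) ∂π
        = ∫⁻ x, (fun y : Fin d → ℝ => ENNReal.ofReal (|y ⬝ᵥ D *ᵥ y| ^ p)) (V *ᵥ x) ∂π :=
          (lintegral_rot hUmem hfm).symm
      _ = ∫⁻ x, ENNReal.ofReal ((∑ i, lam i * (x i) ^ 2) ^ p) ∂π := by
          refine lintegral_congr fun x => ?_
          simp only
          rw [hquad x, abs_of_nonneg
            (Finset.sum_nonneg fun i _ => mul_nonneg (hlam i) (sq_nonneg _))]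
      _ ≤ ∫⁻ x, ENNReal.ofReal (D.trace ^ (p - 1) * ∑ i, lam i * (x i) ^ (2 * p)) ∂π :=
          lintegral_mono fun x => ENNReal.ofReal_le_ofReal
            (jensen_aux p hp lam hlam D.trace htr x)
      _ = ∫⁻ x, ENNReal.ofReal (D.trace ^ (p - 1)) *
            ∑ i, ENNReal.ofReal (lam i) * ENNReal.ofReal ((x i) ^ (2 * p)) ∂π := by
          refine lintegral_congr fun x => ?_
          rw [ENNReal.ofReal_mul (pow_nonneg hT0 _)]
          congr 1
          rw [ENNReal.ofReal_sum_of_nonneg fun i _ =>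
            mul_nonneg (hlam i) ((even_two_mul p).pow_nonneg _)]
          exact Finset.sum_congr rfl fun i _ => ENNReal.ofReal_mul (hlam i)
      _ = ENNReal.ofReal (D.trace ^ (p - 1)) *
            ∑ i, ENNReal.ofReal (lam i) * M := by
          rw [lintegral_const_mul _ hsum_meas]
          congr 1
          rw [lintegral_finset_sum _ fun i _ =>
            (((measurable_pi_apply i).pow_const (2 * p)).ennreal_ofReal).const_mul _]
          refine Finset.sum_congr rfl fun i _ => ?_
          rw [lintegral_const_mul _ ((measurable_pi_apply i).pow_const (2 * p)).ennreal_ofReal]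
          rw [hπ, lintegral_eval_pow i (2 * p), hM]
      _ = ENNReal.ofReal (D.trace ^ p) * M := by
          rw [← Finset.sum_mul, ← ENNReal.ofReal_sum_of_nonneg fun i _ => hlam i, ← htr,
            ← mul_assoc, ← ENNReal.ofReal_mul (pow_nonneg hT0 _)]
          congr 2
          rw [← pow_succ]
          congr 1
          omega
  -- conclude
  have hfin : ENNReal.ofReal (D.trace ^ p) * M ≠ ⊤ :=
    ENNReal.mul_ne_top ENNReal.ofReal_ne_top hMtop
  have h1 : (∫⁻ x, ENNReal.ofReal (|x ⬝ᵥ D *ᵥ x| ^ p) ∂π).toReal ≤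
      (ENNReal.ofReal (D.trace ^ p) * M).toReal := ENNReal.toReal_mono hfin key
  have h2 : (ENNReal.ofReal (D.trace ^ p) * M).toReal = D.trace ^ p * M.toReal := by
    rw [ENNReal.toReal_mul, ENNReal.toReal_ofReal (pow_nonneg hT0 p)]
  refine le_trans (h2 ▸ h1) ?_
  have hdbl : (0 : ℝ) ≤ (Nat.doubleFactorial (2 * p - 1) : ℝ) := Nat.cast_nonneg _
  nlinarith [pow_nonneg hT0 p, ENNReal.toReal_nonneg (a := M),
    mul_nonneg hdbl hTrDp]
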